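/- For any balanced lattice design X ∈ U(n, q^s) with n ≥ 2 and s ≥ 2: Ave(χ²)(X) ≥ (n(n−1)/(s(s−1)))(θ² + 2θf + f) + a, where β̄ = s(n−q)/(q(n−1)), θ = ⌊β̄⌋, f = β̄ − θ, and a = (q² n s + n²(1 − s − q))/(q²(s−1)). -/

import Mathlib

open Finset

/-- A design `X ∈ U(n, q^s)` is balanced: `q ∣ n` and every level occurs exactly
`n / q` times in each column. -/
def IsBalanced {n s q : ℕ} (X : Fin n → Fin s → Fin q) : Prop :=
  q ∣ n ∧ ∀ (j : Fin s) (ℓ : Fin q),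
    (univ.filter fun i => X i j = ℓ).card = n / q

/-- The index set of pairs 1 ≤ i < k ≤ n. -/
def pairs (n : ℕ) : Finset (Fin n × Fin n) := univ.filter fun p => p.1 < p.2

/-- The nonorthogonality criterion
Ave(χ²)(X) = (2/(s(s−1))) ∑_{j<l} ∑_{τ₁,τ₂} (N^{(j,l)}_{τ₁,τ₂} − n/q²)². -/
noncomputable def aveChiSq {n s q : ℕ} (X : Fin n → Fin s → Fin q) : ℝ :=
  2 / ((s : ℝ) * ((s : ℝ) - 1)) *
    ∑ p ∈ pairs s, ∑ τ : Fin q × Fin q,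
      (((univ.filter fun i => X i p.1 = τ.1 ∧ X i p.2 = τ.2).card : ℝ)
        - (n : ℝ) / (q : ℝ) ^ 2) ^ 2

lemma ind_and (P Q : Prop) [Decidable P] [Decidable Q] :
    (if P ∧ Q then (1:ℝ) else 0) = (if P then 1 else 0) * (if Q then 1 else 0) := by
  by_cases hP : P <;> by_cases hQ : Q <;> simp [hP, hQ]

lemma sum_ind {q : ℕ} (a b : Fin q) :
    ∑ τ : Fin q, (if a = τ then (1:ℝ) else 0) * (if b = τ then 1 else 0)
      = if a = b then 1 else 0 := by
  rcases eq_or_ne a b with h | h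
  · subst h; simp [← ind_and]
  · simp only [← ind_and]
    rw [Finset.sum_eq_zero, if_neg h]
    intro τ _
    rcases eq_or_ne a τ with rfl | h2
    · simp [Ne.symm h]
    · simp [h2]

lemma card_filter_real {α : Type*} [Fintype α] (p : α → Prop) [DecidablePred p] :
    ((univ.filter p).card : ℝ) = ∑ x, if p x then (1:ℝ) else 0 := by
  rw [Finset.card_filter]
  push_cast
  simp

lemma two_sum_pairs {m : ℕ} (G : Fin m → Fin m → ℝ) (hG : ∀ j l, G l j = G j l) :
    2 * ∑ p ∈ pairs m, G p.1 p.2 = (∑ j, ∑ l, G j l) - ∑ j, G j j := by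
  have h0 : ∑ p ∈ pairs m, G p.1 p.2 = ∑ j, ∑ l, if j < l then G j l else 0 := by
    rw [pairs, Finset.sum_filter, Fintype.sum_prod_type]
  have h1 : ∑ j, ∑ l, (if l < j then G j l else 0) = ∑ j, ∑ l, if j < l then G j l else 0 := by
    rw [Finset.sum_comm]
    refine Finset.sum_congr rfl fun j _ => Finset.sum_congr rfl fun l _ => ?_
    rw [hG]
  have h2 : ∑ j, ∑ l, (if j = l then G j l else 0) = ∑ j, G j j := by
    refine Finset.sum_congr rfl fun j _ => ?_
    rw [Finset.sum_ite_eq]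
    simp
  have h3 : ∀ (j l : Fin m), G j l = (if j < l then G j l else 0) + (if l < j then G j l else 0)
      + (if j = l then G j l else 0) := by
    intro j l
    rcases lt_trichotomy j l with h | h | h
    · simp [h, asymm h, ne_of_lt h]
    · simp [h, lt_irrefl]
    · simp [h, asymm h, (ne_of_lt h).symm]
  have h4 : ∑ j, ∑ l, G j l = (∑ j, ∑ l, if j < l then G j l else 0)
      + (∑ j, ∑ l, if l < j then G j l else 0) + (∑ j, ∑ l, if j = l then G j l else 0) := by
    rw [← Finset.sum_add_distrib, ← Finset.sum_add_distrib]
    refine Finset.sum_congr rfl fun j _ => ?_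
    rw [← Finset.sum_add_distrib, ← Finset.sum_add_distrib]
    exact Finset.sum_congr rfl fun l _ => h3 j l
  rw [h0, h4, h1, h2]
  ring

lemma sum_swap4 {α β : Type*} [Fintype α] [Fintype β] (F : α → α → β → β → ℝ) :
    ∑ j, ∑ l, ∑ i, ∑ k, F j l i k = ∑ i, ∑ k, ∑ j, ∑ l, F j l i k := by
  have h1 : ∀ j : α, ∑ l, ∑ i, ∑ k, F j l i k = ∑ i : β, ∑ l, ∑ k, F j l i k :=
    fun j => Finset.sum_comm
  simp_rw [h1]
  rw [Finset.sum_comm]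
  refine Finset.sum_congr rfl fun i _ => ?_
  have h2 : ∀ j : α, ∑ l, ∑ k, F j l i k = ∑ k : β, ∑ l, F j l i k :=
    fun j => Finset.sum_comm
  simp_rw [h2]
  rw [Finset.sum_comm]

lemma sum_affine {α : Type*} [Fintype α] (F : α → ℝ) (K1 K2 : ℝ) :
    ∑ x, (F x - K1 + K2) = (∑ x, F x) - (Fintype.card α) * K1 + (Fintype.card α) * K2 := by
  rw [Finset.sum_add_distrib, Finset.sum_sub_distrib, Finset.sum_const, Finset.sum_const,
    card_univ, nsmul_eq_mul, nsmul_eq_mul]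

set_option maxHeartbeats 1000000 in
/-- Theorem 4 (lower bound): for a balanced design,
Ave(χ²)(X) ≥ (n(n−1)/(s(s−1)))(θ² + 2θf + f) + a, where β̄ = s(n−q)/(q(n−1)),
θ = ⌊β̄⌋, f = β̄ − θ and a = (q²ns + n²(1 − s − q)) / (q²(s−1)). -/
theorem aveChiSq_lower_bound (n s q : ℕ) (hq : 2 ≤ q) (hn : 2 ≤ n) (hs : 2 ≤ s)
    (X : Fin n → Fin s → Fin q) (hX : IsBalanced X)
    (βbar : ℝ) (hβbar : βbar = (s : ℝ) * ((n : ℝ) - q) / ((q : ℝ) * ((n : ℝ) - 1)))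
    (θ : ℕ) (hθ : θ = ⌊βbar⌋₊)
    (f : ℝ) (hf : f = βbar - θ)
    (a : ℝ) (ha : a = ((q : ℝ) ^ 2 * n * s + (n : ℝ) ^ 2 * (1 - s - q)) /
      ((q : ℝ) ^ 2 * ((s : ℝ) - 1))) :
    aveChiSq X ≥ (n : ℝ) * ((n : ℝ) - 1) / ((s : ℝ) * ((s : ℝ) - 1)) *
        ((θ : ℝ) ^ 2 + 2 * θ * f + f) + a := by
  obtain ⟨⟨m, hm⟩, hbal⟩ := hX
  have hq0 : 0 < q := by omega
  have hm1 : 1 ≤ m := by nlinarith [hm, hn]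
  have hnq : n / q = m := by rw [hm]; exact Nat.mul_div_cancel_left m hq0
  have hqR : (q:ℝ) ≠ 0 := by positivity
  have hn1R : (n:ℝ) - 1 ≠ 0 := by
    have : (2:ℝ) ≤ n := by exact_mod_cast hn
    linarith
  have hs1R : (0:ℝ) < (s:ℝ) - 1 := by
    have : (2:ℝ) ≤ s := by exact_mod_cast hs
    linarith
  have hsR : (0:ℝ) < s := by linarith
  have hnm : (n:ℝ) = q * m := by exact_mod_cast hm
  set c : ℝ := (n : ℝ) / (q : ℝ)^2 with hc
  -- indicator expansion of the cell counts
  have hN : ∀ (j l : Fin s) (τ : Fin q × Fin q),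
      ((univ.filter fun i => X i j = τ.1 ∧ X i l = τ.2).card : ℝ)
        = ∑ i, (if X i j = τ.1 then (1:ℝ) else 0) * (if X i l = τ.2 then 1 else 0) := by
    intro j l τ
    rw [card_filter_real]
    exact Finset.sum_congr rfl fun i _ => ind_and _ _
  -- sum of all cells is n
  have hA : ∀ j l : Fin s, ∑ τ : Fin q × Fin q,
      ((univ.filter fun i => X i j = τ.1 ∧ X i l = τ.2).card : ℝ) = n := by
    intro j l
    simp_rw [hN]
    rw [Finset.sum_comm]
    have : ∀ i : Fin n, ∑ τ : Fin q × Fin q,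
        (if X i j = τ.1 then (1:ℝ) else 0) * (if X i l = τ.2 then 1 else 0) = 1 := by
      intro i
      rw [Fintype.sum_prod_type]
      dsimp only
      rw [← Finset.sum_mul_sum (f := fun x => if X i j = x then (1:ℝ) else 0)
        (g := fun y => if X i l = y then (1:ℝ) else 0)]
      simp
    simp_rw [this]
    simp
  -- coincidence numbers
  set d : Fin n → Fin n → ℕ := fun i k => (univ.filter fun j => X i j = X k j).card with hdd
  have hd : ∀ i k : Fin n, ((d i k : ℕ) : ℝ) = ∑ j, if X i j = X k j then (1:ℝ) else 0 :=
    fun i k => card_filter_real _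
  have hdiagd : ∀ i : Fin n, d i i = s := by
    intro i
    simp [hdd]
  -- sum of squared cells in terms of agreement indicators
  have hB : ∀ j l : Fin s, ∑ τ : Fin q × Fin q,
      (((univ.filter fun i => X i j = τ.1 ∧ X i l = τ.2).card : ℝ))^2
      = ∑ i, ∑ k, (if X i j = X k j then (1:ℝ) else 0) * (if X i l = X k l then 1 else 0) := by
    intro j l
    simp_rw [hN]
    have step1 : ∀ τ : Fin q × Fin q,
        (∑ i, (if X i j = τ.1 then (1:ℝ) else 0) * (if X i l = τ.2 then 1 else 0))^2
        = ∑ i, ∑ k, ((if X i j = τ.1 then (1:ℝ) else 0) * (if X i l = τ.2 then 1 else 0)) *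
            ((if X k j = τ.1 then (1:ℝ) else 0) * (if X k l = τ.2 then 1 else 0)) :=
      fun τ => by rw [sq, Finset.sum_mul_sum]
    simp_rw [step1]
    rw [Finset.sum_comm]
    refine Finset.sum_congr rfl fun i _ => ?_
    rw [Finset.sum_comm]
    refine Finset.sum_congr rfl fun k _ => ?_
    rw [Fintype.sum_prod_type]
    dsimp only
    have h1 : ∀ τ1 τ2 : Fin q,
        ((if X i j = τ1 then (1:ℝ) else 0) * (if X i l = τ2 then 1 else 0)) *
        ((if X k j = τ1 then (1:ℝ) else 0) * (if X k l = τ2 then 1 else 0))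
        = ((if X i j = τ1 then (1:ℝ) else 0) * (if X k j = τ1 then 1 else 0)) *
          ((if X i l = τ2 then (1:ℝ) else 0) * (if X k l = τ2 then 1 else 0)) :=
      fun τ1 τ2 => by ring
    simp_rw [h1]
    rw [← Finset.sum_mul_sum, sum_ind, sum_ind]
  -- column balance in ℝ
  have hcol : ∀ (j : Fin s) (τ : Fin q), ((univ.filter fun i => X i j = τ).card : ℝ) = m := by
    intro j τ; rw [hbal j τ, hnq]
  have hcol' : ∀ (j : Fin s) (τ : Fin q), ∑ i, (if X i j = τ then (1:ℝ) else 0) = m := by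
    intro j τ; rw [← card_filter_real, hcol]
  have hC : ∀ j : Fin s, ∑ i, ∑ k, (if X i j = X k j then (1:ℝ) else 0)
      = (q:ℝ) * (m:ℝ)^2 := by
    intro j
    have h1 : ∀ i k : Fin n, (if X i j = X k j then (1:ℝ) else 0)
        = ∑ τ : Fin q, (if X i j = τ then (1:ℝ) else 0) * (if X k j = τ then 1 else 0) :=
      fun i k => (sum_ind _ _).symm
    simp_rw [h1]
    have h2 : ∀ i : Fin n, ∑ k : Fin n, ∑ τ : Fin q,
        (if X i j = τ then (1:ℝ) else 0) * (if X k j = τ then 1 else 0)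
        = ∑ τ : Fin q, ∑ k : Fin n,
          (if X i j = τ then (1:ℝ) else 0) * (if X k j = τ then 1 else 0) :=
      fun i => Finset.sum_comm
    simp_rw [h2]
    rw [Finset.sum_comm]
    have h3 : ∀ τ : Fin q, ∑ i : Fin n, ∑ k : Fin n,
        (if X i j = τ then (1:ℝ) else 0) * (if X k j = τ then 1 else 0)
        = (m:ℝ) * (m:ℝ) := by
      intro τ
      rw [← Finset.sum_mul_sum, hcol' j τ]
    simp_rw [h3]
    rw [Finset.sum_const, card_univ, Fintype.card_fin, nsmul_eq_mul]
    ring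
  have hdsum : ∑ i, ∑ k, ((d i k : ℕ) : ℝ) = (s:ℝ) * ((q:ℝ) * (m:ℝ)^2) := by
    simp_rw [hd]
    have h2 : ∀ i : Fin n, ∑ k : Fin n, ∑ j : Fin s, (if X i j = X k j then (1:ℝ) else 0)
        = ∑ j : Fin s, ∑ k : Fin n, (if X i j = X k j then (1:ℝ) else 0) :=
      fun i => Finset.sum_comm
    simp_rw [h2]
    rw [Finset.sum_comm]
    simp_rw [hC]
    rw [Finset.sum_const, card_univ, Fintype.card_fin, nsmul_eq_mul]
  -- expanding a single cell-sum of squared deviations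
  have hexp : ∀ j l : Fin s,
      ∑ τ : Fin q × Fin q,
        (((univ.filter fun i => X i j = τ.1 ∧ X i l = τ.2).card : ℝ) - c)^2
      = (∑ τ : Fin q × Fin q,
          ((univ.filter fun i => X i j = τ.1 ∧ X i l = τ.2).card : ℝ)^2)
        - 2*c*(n:ℝ) + (q:ℝ)^2*c^2 := by
    intro j l
    have e1 : ∀ x : ℝ, (x - c)^2 = x^2 - 2*c*x + c^2 := fun x => by ring
    simp_rw [e1]
    rw [Finset.sum_add_distrib, Finset.sum_sub_distrib, ← Finset.mul_sum, hA j l,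
      Finset.sum_const, card_univ]
    simp only [Fintype.card_prod, Fintype.card_fin, nsmul_eq_mul]
    push_cast
    ring
  -- total sum over all ordered factor pairs
  have hSB : ∑ j : Fin s, ∑ l : Fin s, (∑ τ : Fin q × Fin q,
        ((univ.filter fun i => X i j = τ.1 ∧ X i l = τ.2).card : ℝ)^2)
      = ∑ i, ∑ k, ((d i k : ℕ) : ℝ)^2 := by
    simp_rw [hB]
    rw [sum_swap4 (fun j l i k =>
      (if X i j = X k j then (1:ℝ) else 0) * (if X i l = X k l then 1 else 0))]
    refine Finset.sum_congr rfl fun i _ => Finset.sum_congr rfl fun k _ => ?_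
    rw [hd i k, sq, Finset.sum_mul_sum]
  have hsumall : ∑ j : Fin s, ∑ l : Fin s, (∑ τ : Fin q × Fin q,
        (((univ.filter fun i => X i j = τ.1 ∧ X i l = τ.2).card : ℝ) - c)^2)
      = (∑ i, ∑ k, ((d i k : ℕ) : ℝ)^2) - (s:ℝ)^2*(2*c*(n:ℝ)) + (s:ℝ)^2*((q:ℝ)^2*c^2) := by
    simp_rw [hexp, sum_affine]
    rw [hSB]
    push_cast [Fintype.card_fin]
    ring
  -- diagonal factor pairs
  have hdiagN : ∀ (j : Fin s) (τ : Fin q × Fin q),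
      ((univ.filter fun i => X i j = τ.1 ∧ X i j = τ.2).card : ℝ)
        = if τ.1 = τ.2 then (m:ℝ) else 0 := by
    intro j τ
    rcases eq_or_ne τ.1 τ.2 with h | h
    · rw [if_pos h]
      have hset : (univ.filter fun i => X i j = τ.1 ∧ X i j = τ.2)
          = univ.filter fun i => X i j = τ.1 := by
        apply Finset.filter_congr
        intro i _
        rw [← h, and_self]
      rw [hset, hcol]
    · rw [if_neg h]
      norm_cast
      rw [Finset.card_eq_zero, Finset.filter_eq_empty_iff]
      rintro i - ⟨h1, h2⟩
      exact h (h1 ▸ h2 ▸ rfl)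
  have hdiagsum : ∀ j : Fin s,
      ∑ τ : Fin q × Fin q,
        (((univ.filter fun i => X i j = τ.1 ∧ X i j = τ.2).card : ℝ) - c)^2
      = (q:ℝ)*((m:ℝ) - c)^2 + (q:ℝ)*((q:ℝ)-1)*c^2 := by
    intro j
    simp_rw [hdiagN]
    rw [Fintype.sum_prod_type]
    dsimp only
    have h1 : ∀ τ1 : Fin q, ∑ τ2 : Fin q, ((if τ1 = τ2 then (m:ℝ) else 0) - c)^2
        = ((m:ℝ) - c)^2 + ((q:ℝ)-1)*c^2 := by
      intro τ1
      have e : ∀ τ2 : Fin q, ((if τ1 = τ2 then (m:ℝ) else 0) - c)^2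
          = (if τ1 = τ2 then ((m:ℝ)-c)^2 - c^2 else 0) + c^2 := by
        intro τ2; split <;> ring
      simp_rw [e]
      rw [Finset.sum_add_distrib, Finset.sum_ite_eq, Finset.sum_const, card_univ,
        Fintype.card_fin, nsmul_eq_mul]
      simp only [mem_univ, if_true]
      push_cast
      ring
    simp_rw [h1]
    rw [Finset.sum_const, card_univ, Fintype.card_fin, nsmul_eq_mul]
    ring
  -- pointwise convexity bound for coincidence numbers
  set C : ℝ := (s:ℝ)^2 - (1+2*(θ:ℝ))*(s:ℝ) + (θ:ℝ)^2 + (θ:ℝ) with hCdef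
  have hpt : ∀ i k : Fin n, ((d i k : ℕ) : ℝ)^2 ≥ (1+2*(θ:ℝ))*((d i k : ℕ) : ℝ)
      - (θ:ℝ)^2 - (θ:ℝ) + (if i = k then C else 0) := by
    intro i k
    rcases eq_or_ne i k with rfl | hik
    · rw [if_pos rfl, hdiagd, hCdef]
      apply ge_of_eq
      ring
    · rw [if_neg hik, add_zero]
      rcases le_or_gt (d i k) θ with hD | hD
      · have h1 : ((d i k : ℕ) : ℝ) ≤ (θ:ℝ) := by exact_mod_cast hD
        nlinarith [h1]
      · have h1 : (θ:ℝ) + 1 ≤ ((d i k : ℕ) : ℝ) := by exact_mod_cast hD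
        nlinarith [h1]
  have hTlow : ∑ i, ∑ k, ((d i k : ℕ) : ℝ)^2
      ≥ (1+2*(θ:ℝ))*((s:ℝ)*((q:ℝ)*(m:ℝ)^2)) - (n:ℝ)^2*((θ:ℝ)^2+(θ:ℝ)) + (n:ℝ)*C := by
    have hle : ∑ i, ∑ k, ((1+2*(θ:ℝ))*((d i k : ℕ) : ℝ) - (θ:ℝ)^2 - (θ:ℝ)
          + (if i = k then C else 0))
        ≤ ∑ i, ∑ k, ((d i k : ℕ) : ℝ)^2 :=
      Finset.sum_le_sum fun i _ => Finset.sum_le_sum fun k _ => hpt i k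
    have heq : ∑ i, ∑ k, ((1+2*(θ:ℝ))*((d i k : ℕ) : ℝ) - (θ:ℝ)^2 - (θ:ℝ)
          + (if i = k then C else 0))
        = (1+2*(θ:ℝ))*((s:ℝ)*((q:ℝ)*(m:ℝ)^2)) - (n:ℝ)^2*((θ:ℝ)^2+(θ:ℝ)) + (n:ℝ)*C := by
      have e1 : ∀ i : Fin n, ∑ k, ((1+2*(θ:ℝ))*((d i k : ℕ) : ℝ) - (θ:ℝ)^2 - (θ:ℝ)
            + (if i = k then C else 0))
          = (1+2*(θ:ℝ))*(∑ k, ((d i k : ℕ) : ℝ)) - (n:ℝ)*((θ:ℝ)^2) - (n:ℝ)*(θ:ℝ) + C := by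
        intro i
        rw [Finset.sum_add_distrib, Finset.sum_sub_distrib, Finset.sum_sub_distrib,
          ← Finset.mul_sum, Finset.sum_const, Finset.sum_const, Finset.sum_ite_eq,
          card_univ, Fintype.card_fin, nsmul_eq_mul, nsmul_eq_mul]
        simp only [mem_univ, if_true]
      simp_rw [e1]
      rw [Finset.sum_add_distrib, Finset.sum_sub_distrib, Finset.sum_sub_distrib,
        ← Finset.mul_sum, Finset.sum_const, Finset.sum_const, Finset.sum_const,
        card_univ, Fintype.card_fin, nsmul_eq_mul, nsmul_eq_mul, nsmul_eq_mul, hdsum]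
      ring
    rw [ge_iff_le, ← heq]
    exact hle
  -- symmetry in the factor pair
  have hGsym : ∀ j l : Fin s,
      (∑ τ : Fin q × Fin q,
        (((univ.filter fun i => X i l = τ.1 ∧ X i j = τ.2).card : ℝ) - c)^2)
      = ∑ τ : Fin q × Fin q,
        (((univ.filter fun i => X i j = τ.1 ∧ X i l = τ.2).card : ℝ) - c)^2 := by
    intro j l
    rw [Fintype.sum_prod_type]
    rw [Finset.sum_comm]
    rw [Fintype.sum_prod_type (f := fun τ : Fin q × Fin q =>
      (((univ.filter fun i => X i j = τ.1 ∧ X i l = τ.2).card : ℝ) - c)^2)]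
    refine Finset.sum_congr rfl fun τ1 _ => Finset.sum_congr rfl fun τ2 _ => ?_
    dsimp only
    have hset : (univ.filter fun i => X i l = τ2 ∧ X i j = τ1)
        = univ.filter fun i => X i j = τ1 ∧ X i l = τ2 :=
      Finset.filter_congr fun i _ => and_comm
    rw [hset]
  have h2P : 2 * (∑ p ∈ pairs s, ∑ τ : Fin q × Fin q,
        (((univ.filter fun i => X i p.1 = τ.1 ∧ X i p.2 = τ.2).card : ℝ) - c)^2)
      = (∑ j : Fin s, ∑ l : Fin s, ∑ τ : Fin q × Fin q,
        (((univ.filter fun i => X i j = τ.1 ∧ X i l = τ.2).card : ℝ) - c)^2)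
        - ∑ j : Fin s, ∑ τ : Fin q × Fin q,
        (((univ.filter fun i => X i j = τ.1 ∧ X i j = τ.2).card : ℝ) - c)^2 :=
    two_sum_pairs (fun j l => ∑ τ : Fin q × Fin q,
        (((univ.filter fun i => X i j = τ.1 ∧ X i l = τ.2).card : ℝ) - c)^2) hGsym
  -- the main inequality, multiplied through by s(s-1)
  have hss : (0:ℝ) < (s:ℝ)*((s:ℝ)-1) := mul_pos hsR hs1R
  have hEq : ((n:ℝ)*((n:ℝ)-1)/((s:ℝ)*((s:ℝ)-1)) * ((θ:ℝ)^2+2*(θ:ℝ)*f+f) + a) * ((s:ℝ)*((s:ℝ)-1))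
      = ((1+2*(θ:ℝ))*((s:ℝ)*((q:ℝ)*(m:ℝ)^2)) - (n:ℝ)^2*((θ:ℝ)^2+(θ:ℝ)) + (n:ℝ)*C)
        - (s:ℝ)^2*(2*c*(n:ℝ)) + (s:ℝ)^2*((q:ℝ)^2*c^2)
        - (s:ℝ)*((q:ℝ)*((m:ℝ) - c)^2 + (q:ℝ)*((q:ℝ)-1)*c^2) := by
    have h5 : (q:ℝ)*(m:ℝ) - 1 ≠ 0 := by rw [← hnm]; exact hn1R
    rw [hCdef, hc, hf, hβbar, ha, hnm]
    field_simp
    ring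
  have hfinal : ((n:ℝ)*((n:ℝ)-1)/((s:ℝ)*((s:ℝ)-1)) * ((θ:ℝ)^2+2*(θ:ℝ)*f+f) + a) * ((s:ℝ)*((s:ℝ)-1))
      ≤ 2 * ∑ p ∈ pairs s, ∑ τ : Fin q × Fin q,
          (((univ.filter fun i => X i p.1 = τ.1 ∧ X i p.2 = τ.2).card : ℝ) - c)^2 := by
    rw [h2P, hsumall]
    have hD : ∑ j : Fin s, ∑ τ : Fin q × Fin q,
        (((univ.filter fun i => X i j = τ.1 ∧ X i j = τ.2).card : ℝ) - c)^2
        = (s:ℝ)*((q:ℝ)*((m:ℝ) - c)^2 + (q:ℝ)*((q:ℝ)-1)*c^2) := by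
      simp_rw [hdiagsum]
      rw [Finset.sum_const, card_univ, Fintype.card_fin, nsmul_eq_mul]
    rw [hD, hEq]
    linarith [hTlow]
  -- conclude
  rw [ge_iff_le, aveChiSq]
  have hL : (2:ℝ) / ((s:ℝ)*((s:ℝ)-1)) * ∑ p ∈ pairs s, ∑ τ : Fin q × Fin q,
        (((univ.filter fun i => X i p.1 = τ.1 ∧ X i p.2 = τ.2).card : ℝ) - (n:ℝ)/(q:ℝ)^2)^2
      = (2 * ∑ p ∈ pairs s, ∑ τ : Fin q × Fin q,
          (((univ.filter fun i => X i p.1 = τ.1 ∧ X i p.2 = τ.2).card : ℝ) - c)^2)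
        / ((s:ℝ)*((s:ℝ)-1)) := by
    rw [← hc]
    ring
  rw [hL]
  exact (le_div_iff₀ hss).mpr hfinal
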